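/- Let w_t = w_{t-1} + ε_t with E[ε_t] = 0, Var(ε_t) = Q, and scalar observation z_t = h(w_t) + ν_t with E[ν_t] = 0, Var(ν_t) = R, ε_t and ν_t uncorrelated with each other and with the prior error e_{t-1} = w_{t-1} - μ_{t-1}. Linearize h so that h(w_t) - h(μ_{t-1}) = H (w_t - μ_{t-1}) for a row vector H. Define μ_t = μ_{t-1} + a K (z_t - h(μ_{t-1})) with K = Σ* Hᵀ (H Σ* Hᵀ + R)^{-1} and Σ* = Σ_{t-1} + Q. Then the posterior error covariance satisfies E[(w_t - μ_t)(w_t - μ_t)ᵀ] = Σ* + a(a-2) K H Σ*. -/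

import Mathlib

open Matrix MeasureTheory
attribute [local instance] Matrix.normedAddCommGroup Matrix.normedSpace
variable {k : ℕ}

noncomputable def Lmv (H : Fin k → ℝ) : Matrix (Fin k) (Fin k) ℝ →L[ℝ] (Fin k → ℝ) :=
  LinearMap.toContinuousLinearMap
    { toFun := fun M => M.mulVec H
      map_add' := fun M N => Matrix.add_mulVec M N H
      map_smul' := fun r M => by simp [Matrix.smul_mulVec] }
@[simp] lemma Lmv_apply (H : Fin k → ℝ) (M : Matrix (Fin k) (Fin k) ℝ) : Lmv H M = M.mulVec H := rfl
noncomputable def Ldp (H : Fin k → ℝ) : (Fin k → ℝ) →L[ℝ] ℝ :=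
  LinearMap.toContinuousLinearMap
    { toFun := fun v => H ⬝ᵥ v
      map_add' := fun u v => dotProduct_add H u v
      map_smul' := fun r v => by simp [dotProduct_smul] }
@[simp] lemma Ldp_apply (H v : Fin k → ℝ) : Ldp H v = H ⬝ᵥ v := rfl
noncomputable def Lvmr (m : Fin k → ℝ) : (Fin k → ℝ) →L[ℝ] Matrix (Fin k) (Fin k) ℝ :=
  LinearMap.toContinuousLinearMap
    { toFun := fun v => vecMulVec v m
      map_add' := fun u v => by ext i j; simp [vecMulVec_apply]; ring
      map_smul' := fun r v => by ext i j; simp [vecMulVec_apply]; ring }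
@[simp] lemma Lvmr_apply (m v : Fin k → ℝ) : Lvmr m v = vecMulVec v m := rfl
noncomputable def Lvml (m : Fin k → ℝ) : (Fin k → ℝ) →L[ℝ] Matrix (Fin k) (Fin k) ℝ :=
  LinearMap.toContinuousLinearMap
    { toFun := fun v => vecMulVec m v
      map_add' := fun u v => by ext i j; simp [vecMulVec_apply]; ring
      map_smul' := fun r v => by ext i j; simp [vecMulVec_apply]; ring }
@[simp] lemma Lvml_apply (m v : Fin k → ℝ) : Lvml m v = vecMulVec m v := rfl
noncomputable def Ltr : Matrix (Fin k) (Fin k) ℝ →L[ℝ] Matrix (Fin k) (Fin k) ℝ :=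
  LinearMap.toContinuousLinearMap
    { toFun := fun M => M.transpose
      map_add' := fun M N => Matrix.transpose_add M N
      map_smul' := fun r M => Matrix.transpose_smul r M }
@[simp] lemma Ltr_apply (M : Matrix (Fin k) (Fin k) ℝ) : Ltr M = M.transpose := rfl

lemma key {Ω : Type*} [MeasurableSpace Ω] (μ : Measure Ω)
    (e : Ω → Fin k → ℝ) (ν : Ω → ℝ) (S : Matrix (Fin k) (Fin k) ℝ) (R a c : ℝ)
    (H : Fin k → ℝ)
    (hq : ∫ ω, vecMulVec (e ω) (e ω) ∂μ = S)
    (hr : ∫ ω, ν ω • e ω ∂μ = 0)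
    (hn : ∫ ω, (ν ω) ^ 2 ∂μ = R)
    (iq : @Integrable _ _ SeminormedAddGroup.toContinuousENorm _ _ (fun ω => vecMulVec (e ω) (e ω)) μ)
    (ir : Integrable (fun ω => ν ω • e ω) μ)
    (in2 : Integrable (fun ω => (ν ω) ^ 2) μ) :
    ∫ ω, vecMulVec (e ω - (a * (H ⬝ᵥ e ω + ν ω)) • (c • S.mulVec H))
        (e ω - (a * (H ⬝ᵥ e ω + ν ω)) • (c • S.mulVec H)) ∂μ
      = S + ((a*c)^2 * (H ⬝ᵥ S.mulVec H + R) - 2*(a*c)) • vecMulVec (S.mulVec H) (S.mulVec H) := by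
  set m := S.mulVec H with hmdef
  set u : Ω → Fin k → ℝ := fun ω => (vecMulVec (e ω) (e ω)).mulVec H + ν ω • e ω with hudef
  have hu : ∀ ω, u ω = (H ⬝ᵥ e ω + ν ω) • e ω := by
    intro ω; funext i
    simp only [hudef, Pi.add_apply, Pi.smul_apply, smul_eq_mul, Matrix.mulVec, dotProduct,
      vecMulVec_apply]
    rw [add_mul, Finset.sum_mul]
    exact congrArg₂ (· + ·) (Finset.sum_congr rfl fun l _ => by ring) (by ring)
  have iu : Integrable u μ := by
    exact (((Lmv H).integrable_comp iq).add ir : Integrable (fun ω => Lmv H (vecMulVec (e ω) (e ω)) + ν ω • e ω) μ)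
  have hiu : ∫ ω, u ω ∂μ = m := by
    have h1 : Integrable (fun ω => (vecMulVec (e ω) (e ω)).mulVec H) μ := (Lmv H).integrable_comp iq
    rw [hudef]
    rw [integral_add h1 ir]
    have h2 : ∫ ω, (vecMulVec (e ω) (e ω)).mulVec H ∂μ = (∫ ω, vecMulVec (e ω) (e ω) ∂μ).mulVec H :=
      (Lmv H).integral_comp_comm iq
    rw [h2, hq, hr, add_zero]
  have hpt : ∀ ω, vecMulVec (e ω - (a * (H ⬝ᵥ e ω + ν ω)) • (c • m))
        (e ω - (a * (H ⬝ᵥ e ω + ν ω)) • (c • m))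
      = vecMulVec (e ω) (e ω)
        - (a*c) • vecMulVec (u ω) m
        - (a*c) • vecMulVec m (u ω)
        + ((a*c)^2 * (H ⬝ᵥ u ω + H ⬝ᵥ (ν ω • e ω) + (ν ω)^2)) • vecMulVec m m := by
    intro ω
    rw [hu ω]
    ext i j
    simp only [vecMulVec_apply, Matrix.sub_apply, Matrix.add_apply, Matrix.smul_apply,
      Pi.sub_apply, Pi.smul_apply, smul_eq_mul, dotProduct_smul]
    ring
  have i2 : @Integrable _ _ SeminormedAddGroup.toContinuousENorm _ _ (fun ω => (a*c) • vecMulVec (u ω) m) μ :=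
    (((Lvmr m).integrable_comp iu : @Integrable _ _ SeminormedAddGroup.toContinuousENorm _ _ (fun ω => vecMulVec (u ω) m) μ)).smul (a*c)
  have i3 : @Integrable _ _ SeminormedAddGroup.toContinuousENorm _ _ (fun ω => (a*c) • vecMulVec m (u ω)) μ :=
    (((Lvml m).integrable_comp iu : @Integrable _ _ SeminormedAddGroup.toContinuousENorm _ _ (fun ω => vecMulVec m (u ω)) μ)).smul (a*c)
  have idpu : Integrable (fun ω => H ⬝ᵥ u ω) μ := (Ldp H).integrable_comp iu
  have idpr : Integrable (fun ω => H ⬝ᵥ (ν ω • e ω)) μ := (Ldp H).integrable_comp ir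
  have iadd1 : Integrable (fun ω => H ⬝ᵥ u ω + H ⬝ᵥ (ν ω • e ω)) μ := idpu.add idpr
  have iadd2 : Integrable (fun ω => H ⬝ᵥ u ω + H ⬝ᵥ (ν ω • e ω) + (ν ω)^2) μ := iadd1.add in2
  have isc : Integrable (fun ω => (a*c)^2 * (H ⬝ᵥ u ω + H ⬝ᵥ (ν ω • e ω) + (ν ω)^2)) μ :=
    iadd2.const_mul _
  have i4 : @Integrable _ _ SeminormedAddGroup.toContinuousENorm _ _ (fun ω => ((a*c)^2 * (H ⬝ᵥ u ω + H ⬝ᵥ (ν ω • e ω) + (ν ω)^2)) • vecMulVec m m) μ :=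
    isc.smul_const _
  have iA : @Integrable _ _ SeminormedAddGroup.toContinuousENorm _ _ (fun ω => vecMulVec (e ω) (e ω) - (a*c) • vecMulVec (u ω) m) μ := iq.sub i2
  have iB : @Integrable _ _ SeminormedAddGroup.toContinuousENorm _ _ (fun ω => vecMulVec (e ω) (e ω) - (a*c) • vecMulVec (u ω) m
      - (a*c) • vecMulVec m (u ω)) μ := iA.sub i3
  have e2 : ∫ ω, vecMulVec (u ω) m ∂μ = vecMulVec m m := by
    have : ∫ ω, vecMulVec (u ω) m ∂μ = vecMulVec (∫ ω, u ω ∂μ) m := (Lvmr m).integral_comp_comm iu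
    rw [this, hiu]
  have e3 : ∫ ω, vecMulVec m (u ω) ∂μ = vecMulVec m m := by
    have : ∫ ω, vecMulVec m (u ω) ∂μ = vecMulVec m (∫ ω, u ω ∂μ) := (Lvml m).integral_comp_comm iu
    rw [this, hiu]
  have edpu : ∫ ω, H ⬝ᵥ u ω ∂μ = H ⬝ᵥ m := by
    have : ∫ ω, H ⬝ᵥ u ω ∂μ = H ⬝ᵥ ∫ ω, u ω ∂μ := (Ldp H).integral_comp_comm iu
    rw [this, hiu]
  have edpr : ∫ ω, H ⬝ᵥ (ν ω • e ω) ∂μ = 0 := by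
    have : ∫ ω, H ⬝ᵥ (ν ω • e ω) ∂μ = H ⬝ᵥ ∫ ω, ν ω • e ω ∂μ := (Ldp H).integral_comp_comm ir
    rw [this, hr]; simp
  have esc : ∫ ω, (a*c)^2 * (H ⬝ᵥ u ω + H ⬝ᵥ (ν ω • e ω) + (ν ω)^2) ∂μ
      = (a*c)^2 * (H ⬝ᵥ m + R) := by
    rw [integral_const_mul, integral_add iadd1 in2, integral_add idpu idpr,
      edpu, edpr, hn, add_zero]
  have e4 : ∫ ω, ((a*c)^2 * (H ⬝ᵥ u ω + H ⬝ᵥ (ν ω • e ω) + (ν ω)^2)) • vecMulVec m m ∂μ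
      = ((a*c)^2 * (H ⬝ᵥ m + R)) • vecMulVec m m := by
    rw [integral_smul_const, esc]
  calc ∫ ω, vecMulVec (e ω - (a * (H ⬝ᵥ e ω + ν ω)) • (c • m))
        (e ω - (a * (H ⬝ᵥ e ω + ν ω)) • (c • m)) ∂μ
      = ∫ ω, (vecMulVec (e ω) (e ω)
        - (a*c) • vecMulVec (u ω) m
        - (a*c) • vecMulVec m (u ω)
        + ((a*c)^2 * (H ⬝ᵥ u ω + H ⬝ᵥ (ν ω • e ω) + (ν ω)^2)) • vecMulVec m m) ∂μ :=
        integral_congr_ae (Filter.Eventually.of_forall hpt)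
    _ = S + ((a*c)^2 * (H ⬝ᵥ m + R) - 2*(a*c)) • vecMulVec m m := by
        rw [integral_add iB i4, integral_sub iA i3, integral_sub iq i2,
          integral_smul, integral_smul, hq, e2, e3, e4]
        module
/-- EKF with forgetting: with state evolution `w_t = w_{t-1} + ε`, scalar
observation `z = h(w_t) + ν`, linearization `h(w) - h(μ_{t-1}) = H ⬝ (w - μ_{t-1})`,
prior error covariance `Σ_{t-1}`, state noise covariance `Q`, observation noise
variance `R`, Kalman gain `K = Σ* Hᵀ (H Σ* Hᵀ + R)⁻¹` with `Σ* = Σ_{t-1} + Q`,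
and mean update `μ_t = μ_{t-1} + a K (z - h(μ_{t-1}))`, the posterior error
covariance is `Σ* + a(a-2) K H Σ*`. -/
theorem stmt_6 {k : ℕ} {Ω : Type*} [MeasurableSpace Ω]
    (μ : Measure Ω) [IsProbabilityMeasure μ]
    (wprev : Ω → Fin k → ℝ) (ε : Ω → Fin k → ℝ) (ν : Ω → ℝ)
    (μprev : Fin k → ℝ) (Q Sprev : Matrix (Fin k) (Fin k) ℝ) (R : ℝ)
    (H : Fin k → ℝ) (hfun : (Fin k → ℝ) → ℝ) (a : ℝ)
    -- zero means
    (hε0 : ∫ ω, ε ω ∂μ = 0) (hν0 : ∫ ω, ν ω ∂μ = 0)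
    -- covariances
    (hQ : ∫ ω, vecMulVec (ε ω) (ε ω) ∂μ = Q)
    (hR : ∫ ω, (ν ω) ^ 2 ∂μ = R)
    (hSprev : ∫ ω, vecMulVec (wprev ω - μprev) (wprev ω - μprev) ∂μ = Sprev)
    -- uncorrelatedness of ε, ν and the prior error e = wprev - μprev
    (hεe : ∫ ω, vecMulVec (ε ω) (wprev ω - μprev) ∂μ = 0)
    (heε : ∫ ω, vecMulVec (wprev ω - μprev) (ε ω) ∂μ = 0)
    (hνε : ∫ ω, (ν ω) • ε ω ∂μ = 0)
    (hνe : ∫ ω, (ν ω) • (wprev ω - μprev) ∂μ = 0)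
    -- integrability of all the second-moment quantities involved
    (int1 : @Integrable _ _ SeminormedAddGroup.toContinuousENorm _ _ (fun ω => vecMulVec (ε ω) (ε ω)) μ)
    (int2 : @Integrable _ _ SeminormedAddGroup.toContinuousENorm _ _ (fun ω => vecMulVec (wprev ω - μprev) (wprev ω - μprev)) μ)
    (int3 : @Integrable _ _ SeminormedAddGroup.toContinuousENorm _ _ (fun ω => vecMulVec (ε ω) (wprev ω - μprev)) μ)
    (int4 : @Integrable _ _ SeminormedAddGroup.toContinuousENorm _ _ (fun ω => vecMulVec (wprev ω - μprev) (ε ω)) μ)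
    (int5 : Integrable (fun ω => (ν ω) ^ 2) μ)
    (int6 : Integrable (fun ω => (ν ω) • ε ω) μ)
    (int7 : Integrable (fun ω => (ν ω) • (wprev ω - μprev)) μ)
    -- linearization of the observation function around μprev
    (hlin : ∀ ω, hfun (wprev ω + ε ω) - hfun μprev
      = H ⬝ᵥ (wprev ω + ε ω - μprev))
    -- denominator of the Kalman gain is nonzero
    (hden : H ⬝ᵥ (Sprev + Q).mulVec H + R ≠ 0) :
    -- posterior error covariance of the forgetting update
    (∫ ω, vecMulVec
        ((wprev ω + ε ω) -
          (μprev + (a * ((hfun (wprev ω + ε ω) + ν ω) - hfun μprev)) •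
            ((H ⬝ᵥ (Sprev + Q).mulVec H + R)⁻¹ • (Sprev + Q).mulVec H)))
        ((wprev ω + ε ω) -
          (μprev + (a * ((hfun (wprev ω + ε ω) + ν ω) - hfun μprev)) •
            ((H ⬝ᵥ (Sprev + Q).mulVec H + R)⁻¹ • (Sprev + Q).mulVec H))) ∂μ)
      = (Sprev + Q) + (a * (a - 2)) •
          (vecMulVec ((H ⬝ᵥ (Sprev + Q).mulVec H + R)⁻¹ • (Sprev + Q).mulVec H) H
            * (Sprev + Q)) := by
  classical
  have he : ∀ ω, wprev ω + ε ω - μprev = (wprev ω - μprev) + ε ω := by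
    intro ω; funext i; simp; ring
  have hsplit : ∀ ω, vecMulVec (wprev ω + ε ω - μprev) (wprev ω + ε ω - μprev)
      = vecMulVec (wprev ω - μprev) (wprev ω - μprev) + vecMulVec (wprev ω - μprev) (ε ω)
        + vecMulVec (ε ω) (wprev ω - μprev) + vecMulVec (ε ω) (ε ω) := by
    intro ω; rw [he ω]; ext i j
    simp only [vecMulVec_apply, Matrix.add_apply, Pi.add_apply]
    ring
  have i24 : @Integrable _ _ SeminormedAddGroup.toContinuousENorm _ _ (fun ω => vecMulVec (wprev ω - μprev) (wprev ω - μprev)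
      + vecMulVec (wprev ω - μprev) (ε ω)) μ := int2.add int4
  have i243 : @Integrable _ _ SeminormedAddGroup.toContinuousENorm _ _ (fun ω => vecMulVec (wprev ω - μprev) (wprev ω - μprev)
      + vecMulVec (wprev ω - μprev) (ε ω) + vecMulVec (ε ω) (wprev ω - μprev)) μ := i24.add int3
  have iq : @Integrable _ _ SeminormedAddGroup.toContinuousENorm _ _ (fun ω => vecMulVec (wprev ω + ε ω - μprev) (wprev ω + ε ω - μprev)) μ := by
    have : @Integrable _ _ SeminormedAddGroup.toContinuousENorm _ _ (fun ω => vecMulVec (wprev ω - μprev) (wprev ω - μprev)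
      + vecMulVec (wprev ω - μprev) (ε ω) + vecMulVec (ε ω) (wprev ω - μprev)
      + vecMulVec (ε ω) (ε ω)) μ := i243.add int1
    exact this.congr (Filter.Eventually.of_forall fun ω => (hsplit ω).symm)
  have hq : ∫ ω, vecMulVec (wprev ω + ε ω - μprev) (wprev ω + ε ω - μprev) ∂μ = Sprev + Q := by
    rw [integral_congr_ae (Filter.Eventually.of_forall hsplit),
      integral_add i243 int1, integral_add i24 int3, integral_add int2 int4,
      hSprev, heε, hεe, hQ, add_zero, add_zero]
  have hrsplit : ∀ ω, ν ω • (wprev ω + ε ω - μprev)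
      = ν ω • (wprev ω - μprev) + ν ω • ε ω := by
    intro ω; rw [he ω, smul_add]
  have ir : Integrable (fun ω => ν ω • (wprev ω + ε ω - μprev)) μ := by
    have : Integrable (fun ω => ν ω • (wprev ω - μprev) + ν ω • ε ω) μ := int7.add int6
    exact this.congr (Filter.Eventually.of_forall fun ω => (hrsplit ω).symm)
  have hr : ∫ ω, ν ω • (wprev ω + ε ω - μprev) ∂μ = 0 := by
    rw [integral_congr_ae (Filter.Eventually.of_forall hrsplit),
      integral_add int7 int6, hνe, hνε, add_zero]
  -- symmetry of Sprev + Q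
  have hsym : (Sprev + Q)ᵀ = Sprev + Q := by
    have hts : ∀ (f : Ω → Fin k → ℝ) (hf : @Integrable _ _ SeminormedAddGroup.toContinuousENorm _ _ (fun ω => vecMulVec (f ω) (f ω)) μ),
        (∫ ω, vecMulVec (f ω) (f ω) ∂μ)ᵀ = ∫ ω, vecMulVec (f ω) (f ω) ∂μ := by
      intro f hf
      have h1 : ∫ ω, (vecMulVec (f ω) (f ω))ᵀ ∂μ = (∫ ω, vecMulVec (f ω) (f ω) ∂μ)ᵀ :=
        ContinuousLinearMap.integral_comp_comm Ltr hf
      rw [← h1]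
      refine integral_congr_ae (Filter.Eventually.of_forall fun ω => ?_)
      ext i j; simp [vecMulVec_apply, Matrix.transpose_apply, mul_comm]
    rw [Matrix.transpose_add, ← hSprev, ← hQ, hts _ int2, hts _ int1, hSprev, hQ]
  -- rewrite the integrand into the form of `key`
  have hv : ∀ ω, (wprev ω + ε ω) -
      (μprev + (a * ((hfun (wprev ω + ε ω) + ν ω) - hfun μprev)) •
        ((H ⬝ᵥ (Sprev + Q).mulVec H + R)⁻¹ • (Sprev + Q).mulVec H))
      = (wprev ω + ε ω - μprev) - (a * (H ⬝ᵥ (wprev ω + ε ω - μprev) + ν ω)) •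
        ((H ⬝ᵥ (Sprev + Q).mulVec H + R)⁻¹ • (Sprev + Q).mulVec H) := by
    intro ω
    rw [show (hfun (wprev ω + ε ω) + ν ω) - hfun μprev
        = H ⬝ᵥ (wprev ω + ε ω - μprev) + ν ω from by have h := hlin ω; linarith]
    abel
  simp only [hv]
  rw [key μ (fun ω => wprev ω + ε ω - μprev) ν (Sprev + Q) R a
    ((H ⬝ᵥ (Sprev + Q).mulVec H + R)⁻¹) H hq hr hR iq ir int5]
  -- final algebra
  have hmm : vecMulVec ((H ⬝ᵥ (Sprev + Q).mulVec H + R)⁻¹ • (Sprev + Q).mulVec H) H * (Sprev + Q)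
      = (H ⬝ᵥ (Sprev + Q).mulVec H + R)⁻¹ •
        vecMulVec ((Sprev + Q).mulVec H) ((Sprev + Q).mulVec H) := by
    have hS' : ∀ l j, (Sprev + Q) l j = (Sprev + Q) j l := by
      intro l j
      exact (congrFun (congrFun hsym l) j).symm
    ext i j
    have hmj : (Sprev + Q).mulVec H j = ∑ l, (Sprev + Q) l j * H l := by
      simp only [Matrix.mulVec, dotProduct]
      exact Finset.sum_congr rfl fun l _ => by rw [hS' j l]
    simp only [Matrix.mul_apply, vecMulVec_apply, Matrix.smul_apply, Pi.smul_apply, smul_eq_mul]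
    rw [hmj]
    conv_rhs => rw [Finset.mul_sum, Finset.mul_sum]
    exact Finset.sum_congr rfl fun l _ => by ring
  rw [hmm, smul_smul]
  congr 2
  have hd := hden
  field_simp
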